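/- Let P be a finite set of primes with minimum element q, and suppose that for all p ∈ P, (‖p‖ + q − 2)/log_q(p) ≤ ‖q‖ + q − 1. Then for all n > 1, ‖n‖_P/log_3(n) ≤ ‖q‖/log_3(q) + (q−1)/log_3(q), equivalently ‖n‖_P/log_q(n) ≤ ‖q‖ + q − 1. -/

import Mathlib

/-- `IsExpr n m` : the positive integer `n` is representable by an arithmetic
expression in basis `{1, +, ·}` containing exactly `m` ones. -/
inductive IsExpr : ℕ → ℕ → Prop
  | one : IsExpr 1 1
  | add {a b m n : ℕ} : IsExpr a m → IsExpr b n → IsExpr (a + b) (m + n)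
  | mul {a b m n : ℕ} : IsExpr a m → IsExpr b n → IsExpr (a * b) (m + n)

/-- Integer complexity `‖n‖`: the minimum number of 1's needed to represent `n`
using 1's, addition and multiplication. -/
noncomputable def cpx (n : ℕ) : ℕ := sInf {m | IsExpr n m}

/-- `PAlg P n c` : the `P`-algorithm, run on the positive integer `n`, builds an
expression for `n` in basis `{1, +, ·}` containing `c` ones.  The algorithm
represents `1` as `1`; represents `p ∈ P` by a shortest expression (of `cpx p`
ones); if `n ∉ P` is divisible by some `p ∈ P` it writes `n = p · (n / p)` and
recurses on `n / p`; otherwise it writes `n = 1 + (n - 1)` and recurses on `n - 1`. -/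
inductive PAlg (P : Finset ℕ) : ℕ → ℕ → Prop
  | one : PAlg P 1 1
  | base {p : ℕ} : p ∈ P → PAlg P p (cpx p)
  | div {n p c : ℕ} : 1 < n → n ∉ P → p ∈ P → p ∣ n →
      PAlg P (n / p) c → PAlg P n (cpx p + c)
  | step {n c : ℕ} : 1 < n → (∀ p ∈ P, ¬ p ∣ n) →
      PAlg P (n - 1) c → PAlg P n (c + 1)

/-- `‖n‖_P` : the number of ones in the expression built by the `P`-algorithm. -/
noncomputable def cpxP (P : Finset ℕ) (n : ℕ) : ℕ := sInf {c | PAlg P n c}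

section AuxExpr

lemma isExpr_ne_zero {n m : ℕ} (h : IsExpr n m) : m ≠ 0 := by
  induction h with
  | one => exact one_ne_zero
  | add _ _ ih1 _ => simp [Nat.add_eq_zero]; intro h; exact absurd h ih1
  | mul _ _ ih1 _ => simp [Nat.add_eq_zero]; intro h; exact absurd h ih1

lemma isExpr_one_eq {n m : ℕ} (h : IsExpr n m) (hm : m = 1) : n = 1 := by
  cases h with
  | one => rfl
  | add h1 h2 => have := isExpr_ne_zero h1; have := isExpr_ne_zero h2; omega
  | mul h1 h2 => have := isExpr_ne_zero h1; have := isExpr_ne_zero h2; omega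

lemma isExpr_self : ∀ n : ℕ, 1 ≤ n → IsExpr n n := by
  intro n hn
  induction n with
  | zero => omega
  | succ k ih =>
    rcases Nat.eq_or_lt_of_le hn with h | h
    · exact h ▸ IsExpr.one
    · exact IsExpr.add (ih (by omega)) IsExpr.one

lemma two_le_cpx {n : ℕ} (hn : 2 ≤ n) : 2 ≤ cpx n := by
  have hne : {m | IsExpr n m}.Nonempty := ⟨n, isExpr_self n (by omega)⟩
  have hmem : IsExpr n (cpx n) := Nat.sInf_mem hne
  have h1 : cpx n ≠ 0 := isExpr_ne_zero hmem
  have h2 : cpx n ≠ 1 := fun h => by have := isExpr_one_eq hmem h; omega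
  omega

end AuxExpr

section AuxIneq

lemma sq_lt_two_pow (q : ℕ) : q ^ 2 < 2 ^ (q + 1) := by
  induction q with
  | zero => norm_num
  | succ k ih =>
    have h1 : k + 1 ≤ 2 ^ k := Nat.lt_two_pow_self (n := k)
    have e1 : 2 ^ (k + 1) = 2 * 2 ^ k := by ring
    have e2 : 2 ^ (k + 1 + 1) = 4 * 2 ^ k := by ring
    nlinarith

lemma endpoint1 {q : ℕ} (hq3 : 3 ≤ q) :
    2 * Real.log q ≤ ((q : ℝ) + 1) * Real.log 2 := by
  have h := sq_lt_two_pow q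
  have h' : ((q : ℝ)) ^ 2 ≤ (2 : ℝ) ^ (q + 1) := by exact_mod_cast h.le
  have hlog := Real.log_le_log (by positivity) h'
  rw [Real.log_pow, Real.log_pow] at hlog
  push_cast at hlog
  linarith

lemma endpoint2 {q : ℕ} (hq3 : 3 ≤ q) :
    ((q : ℝ) - 1) * Real.log q ≤ ((q : ℝ) + 1) * Real.log ((q : ℝ) - 1) := by
  have hq : (3 : ℝ) ≤ q := by exact_mod_cast hq3
  have hpos : (0 : ℝ) < (q : ℝ) - 1 := by linarith
  have hdiv : Real.log ((q : ℝ) / ((q : ℝ) - 1)) ≤ (q : ℝ) / ((q : ℝ) - 1) - 1 :=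
    Real.log_le_sub_one_of_pos (by positivity)
  have hld : Real.log ((q : ℝ) / ((q : ℝ) - 1)) = Real.log q - Real.log ((q:ℝ) - 1) :=
    Real.log_div (by positivity) (by positivity)
  have hfrac : (q : ℝ) / ((q : ℝ) - 1) - 1 = 1 / ((q : ℝ) - 1) := by field_simp; ring
  have hkey : Real.log q - Real.log ((q:ℝ) - 1) ≤ 1 / ((q:ℝ) - 1) := by
    rw [← hld, ← hfrac]; exact hdiv
  have hl2 : (1/2 : ℝ) ≤ Real.log ((q:ℝ) - 1) := by
    have h1 : Real.log 2 ≤ Real.log ((q:ℝ) - 1) :=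
      Real.log_le_log (by norm_num) (by linarith)
    have := Real.log_two_gt_d9
    linarith
  have hmul := mul_le_mul_of_nonneg_left hkey (le_of_lt hpos)
  rw [mul_one_div, div_self (ne_of_gt hpos)] at hmul
  nlinarith

lemma base_ineq {q n : ℕ} (hq3 : 3 ≤ q) (h2 : 2 ≤ n) (hn : n + 1 ≤ q) :
    (n : ℝ) * Real.log q ≤ ((q : ℝ) + 1) * Real.log n := by
  have hq : (3 : ℝ) ≤ q := by exact_mod_cast hq3
  have hnr : (2 : ℝ) ≤ n := by exact_mod_cast h2
  have hnq : (n : ℝ) ≤ (q : ℝ) - 1 := by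
    have : (n : ℝ) + 1 ≤ q := by exact_mod_cast hn
    linarith
  have e1 := endpoint1 hq3
  have e2 := endpoint2 hq3
  rcases eq_or_lt_of_le hnq with heq | hlt
  · rw [heq] at *; linarith [e2]
  rcases eq_or_lt_of_le hnr with heq2 | hlt2
  · rw [← heq2] at *; linarith [e1]
  have hd : (0 : ℝ) < ((q:ℝ) - 1) - 2 := by linarith
  set a : ℝ := (((q:ℝ) - 1) - n) / (((q:ℝ) - 1) - 2) with ha_def
  set b : ℝ := ((n:ℝ) - 2) / (((q:ℝ) - 1) - 2) with hb_def
  have ha : 0 ≤ a := by apply div_nonneg <;> linarith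
  have hb : 0 ≤ b := by apply div_nonneg <;> linarith
  have hab : a + b = 1 := by rw [ha_def, hb_def]; field_simp; ring
  have hx : a * 2 + b * ((q:ℝ) - 1) = n := by rw [ha_def, hb_def]; field_simp; ring
  have hconc := strictConcaveOn_log_Ioi.concaveOn.2
    (Set.mem_Ioi.mpr (by norm_num : (0:ℝ) < 2))
    (Set.mem_Ioi.mpr (by linarith : (0:ℝ) < (q:ℝ) - 1)) ha hb hab
  simp only [smul_eq_mul] at hconc
  rw [hx] at hconc
  have c1 := mul_le_mul_of_nonneg_left e1 ha
  have c2 := mul_le_mul_of_nonneg_left e2 hb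
  have hxl : (a * 2 + b * ((q:ℝ) - 1)) * Real.log q = (n:ℝ) * Real.log q := by rw [hx]
  have hc3 := mul_le_mul_of_nonneg_left hconc (by linarith : (0:ℝ) ≤ (q:ℝ) + 1)
  nlinarith [c1, c2, hc3, hxl]

end AuxIneq

section AuxPAlg

lemma palg_steps (P : Finset ℕ) (n : ℕ) :
    ∀ j c, j + 1 ≤ n → (∀ i < j, ∀ p ∈ P, ¬ p ∣ (n - i)) →
      PAlg P (n - j) c → PAlg P n (c + j) := by
  intro j
  induction j with
  | zero => intro c _ _ h; simpa using h
  | succ k ih =>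
    intro c hk hQ h
    have hstep : PAlg P (n - k) (c + 1) := by
      apply PAlg.step (by omega) (hQ k (by omega))
      have : n - k - 1 = n - (k + 1) := by omega
      rw [this]; exact h
    have := ih (c + 1) (by omega) (fun i hi => hQ i (by omega)) hstep
    have heq : c + 1 + k = c + (k + 1) := by omega
    rwa [heq] at this

end AuxPAlg

lemma main_bound (P : Finset ℕ) (hprime : ∀ p ∈ P, p.Prime)
    (q : ℕ) (hq : q ∈ P) (hqmin : ∀ p ∈ P, q ≤ p)
    (hcond' : ∀ p ∈ P,
      ((cpx p : ℝ) + q - 2) * Real.log q ≤ ((cpx q : ℝ) + q - 1) * Real.log p) :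
    ∀ n : ℕ, 2 ≤ n → ∃ c, PAlg P n c ∧
      (c : ℝ) * Real.log q ≤ ((cpx q : ℝ) + q - 1) * Real.log n := by
  classical
  have hq2 : 2 ≤ q := (hprime q hq).two_le
  have hq2r : (2 : ℝ) ≤ q := by exact_mod_cast hq2
  have hcq : 2 ≤ cpx q := two_le_cpx hq2
  have hcqr : (2 : ℝ) ≤ cpx q := by exact_mod_cast hcq
  set K : ℝ := (cpx q : ℝ) + q - 1 with hK_def
  have hKq : (q : ℝ) + 1 ≤ K := by rw [hK_def]; linarith
  have hK0 : 0 ≤ K := by linarith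
  have hlogq : 0 < Real.log q := Real.log_pos (by exact_mod_cast hq2)
  intro n
  induction n using Nat.strong_induction_on with
  | _ n IH =>
    intro hn2
    have hlogn : 0 < Real.log n := Real.log_pos (by exact_mod_cast hn2)
    by_cases hnP : n ∈ P
    · refine ⟨cpx n, PAlg.base hnP, ?_⟩
      have h := hcond' n hnP
      nlinarith [hlogq, hq2r]
    · by_cases hnq : n < q
      · -- small case: pure subtraction chain, cost n
        have hq3 : 3 ≤ q := by omega
        refine ⟨n, ?_, ?_⟩
        · have h1 : PAlg P (n - (n - 1)) 1 := by
            have : n - (n - 1) = 1 := by omega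
            rw [this]; exact PAlg.one
          have := palg_steps P n (n - 1) 1 (by omega)
            (fun i hi p hp hdvd => by
              have hple := Nat.le_of_dvd (by omega) hdvd
              have := hqmin p hp
              omega) h1
          have heq : 1 + (n - 1) = n := by omega
          rwa [heq] at this
        · have hb := base_ineq hq3 hn2 (by omega)
          have hlogn0 : 0 ≤ Real.log n := le_of_lt hlogn
          nlinarith [hb, hlogn0, hKq]
      · -- n > q
        have hgt : q < n := by
          rcases Nat.lt_or_ge q n with h | h
          · exact h
          · have : n = q := by omega
            exact absurd (this ▸ hq) hnP
        have hex : ∃ j, ∃ p ∈ P, p ∣ (n - j) := by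
          refine ⟨n % q, q, hq, ?_⟩
          have h := Nat.mod_add_div n q
          exact ⟨n / q, by omega⟩
        set j := Nat.find hex with hj_def
        obtain ⟨p0, hp0P, hp0d⟩ := Nat.find_spec hex
        have hjle : j ≤ n % q := Nat.find_le ⟨q, hq, ⟨n / q, by have := Nat.mod_add_div n q; omega⟩⟩
        have hmod : n % q < q := Nat.mod_lt _ (by omega)
        have hjq : j ≤ q - 1 := by omega
        set m := n - j with hm_def
        have hm2 : 2 ≤ m := by omega
        have hmn : m ≤ n := by omega
        have hlogm_le : Real.log m ≤ Real.log n :=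
          Real.log_le_log (by positivity) (by exact_mod_cast hmn)
        have hlogm0 : 0 < Real.log m := Real.log_pos (by exact_mod_cast hm2)
        have hQmin : ∀ i < j, ∀ p ∈ P, ¬ p ∣ (n - i) := by
          intro i hi p hp hdvd
          exact Nat.find_min hex hi ⟨p, hp, hdvd⟩
        have hqdvd_of_eq : j = q - 1 → q ∣ m := by
          intro hje
          have hjm : j = n % q := by omega
          have h := Nat.mod_add_div n q
          exact ⟨n / q, by omega⟩
        by_cases hmP : m ∈ P
        · -- base at m after j steps
          have hpalg : PAlg P n (cpx m + j) :=
            palg_steps P n j (cpx m) (by omega) hQmin (PAlg.base hmP)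
          refine ⟨cpx m + j, hpalg, ?_⟩
          by_cases hjs : j ≤ q - 2
          · have h := hcond' m hmP
            have hjr : (j : ℝ) ≤ (q : ℝ) - 2 := by
              have : (j : ℝ) + 2 ≤ q := by exact_mod_cast (by omega : j + 2 ≤ q)
              linarith
            have hcast : ((cpx m + j : ℕ) : ℝ) = (cpx m : ℝ) + j := by push_cast; ring
            rw [hcast]
            nlinarith [mul_le_mul_of_nonneg_left hlogm_le hK0]
          · have hje : j = q - 1 := by omega
            have hqm : q ∣ m := hqdvd_of_eq hje
            have hmq : m = q := by
              rcases (hprime m hmP).eq_one_or_self_of_dvd q hqm with h | h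
              · omega
              · omega
            have hcast : ((cpx m + j : ℕ) : ℝ) = (cpx q : ℝ) + ((q : ℝ) - 1) := by
              rw [hmq, hje, Nat.cast_add, Nat.cast_sub (by omega : 1 ≤ q)]; push_cast; ring
            rw [hcast]
            have hlogqn : Real.log q ≤ Real.log n :=
              Real.log_le_log (by positivity) (by exact_mod_cast (by omega : q ≤ n))
            nlinarith [mul_le_mul_of_nonneg_left hlogqn hK0]
        · -- divide at m
          obtain ⟨p, hpP, hpd, hpj⟩ :
              ∃ p, p ∈ P ∧ p ∣ m ∧ ((cpx p : ℝ) + j) * Real.log q ≤ K * Real.log p := by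
            by_cases hqm : q ∣ m
            · refine ⟨q, hq, hqm, ?_⟩
              have hjr : (j : ℝ) ≤ (q : ℝ) - 1 := by
                have : (j : ℝ) + 1 ≤ q := by exact_mod_cast (by omega : j + 1 ≤ q)
                linarith
              nlinarith [hlogq]
            · have hjs : j ≤ q - 2 := by
                by_contra hcon
                exact hqm (hqdvd_of_eq (by omega))
              refine ⟨p0, hp0P, hp0d, ?_⟩
              have h := hcond' p0 hp0P
              have hjr : (j : ℝ) ≤ (q : ℝ) - 2 := by
                have : (j : ℝ) + 2 ≤ q := by exact_mod_cast (by omega : j + 2 ≤ q)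
                linarith
              nlinarith [hlogq]
          have hp2 : 2 ≤ p := (hprime p hpP).two_le
          obtain ⟨X, hmX⟩ := id hpd
          have hX0 : X ≠ 0 := by rintro rfl; rw [mul_zero] at hmX; omega
          have hX1 : X ≠ 1 := by
            rintro rfl; rw [mul_one] at hmX; exact hmP (hmX ▸ hpP)
          have hX2 : 2 ≤ X := by omega
          have hm2X : 2 * X ≤ m := by rw [hmX]; exact Nat.mul_le_mul_right X hp2
          have hXn : X < n := by omega
          obtain ⟨cX, hcX, hbX⟩ := IH X hXn hX2
          have hdiv_eq : m / p = X := by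
            rw [hmX, Nat.mul_div_cancel_left _ (by omega : 0 < p)]
          have hpalgm : PAlg P m (cpx p + cX) := by
            apply PAlg.div (by omega) hmP hpP hpd
            rw [hdiv_eq]; exact hcX
          have hpalg : PAlg P n (cpx p + cX + j) :=
            palg_steps P n j (cpx p + cX) (by omega) hQmin hpalgm
          refine ⟨cpx p + cX + j, hpalg, ?_⟩
          have hlog_split : Real.log m = Real.log p + Real.log X := by
            rw [hmX]
            push_cast
            exact Real.log_mul (by positivity) (by
              have h0 : (0:ℝ) < X := by exact_mod_cast (by omega : 0 < X)
              positivity)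
          have hcast : ((cpx p + cX + j : ℕ) : ℝ) = (cpx p : ℝ) + cX + j := by
            push_cast; ring
          rw [hcast]
          have hKm : K * Real.log m = K * Real.log p + K * Real.log X := by
            rw [hlog_split]; ring
          have hKmn : K * Real.log m ≤ K * Real.log n :=
            mul_le_mul_of_nonneg_left hlogm_le hK0
          have hexp : ((cpx p : ℝ) + cX + j) * Real.log q
              = ((cpx p : ℝ) + j) * Real.log q + (cX : ℝ) * Real.log q := by ring
          rw [hexp]
          linarith [hpj, hbX, hKm, hKmn]

/-- if `q` is the minimum of `P` and for every `p ∈ P`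
`(‖p‖ + q − 2)/log_q p ≤ ‖q‖ + q − 1`, then for all `n > 1`,
`‖n‖_P/log₃ n ≤ ‖q‖/log₃ q + (q−1)/log₃ q`, equivalently
`‖n‖_P/log_q n ≤ ‖q‖ + q − 1`. -/
theorem stmt17 (P : Finset ℕ) (hP : P.Nonempty) (hprime : ∀ p ∈ P, p.Prime)
    (q : ℕ) (hq : q ∈ P) (hqmin : ∀ p ∈ P, q ≤ p)
    (hcond : ∀ p ∈ P, ((cpx p : ℝ) + q - 2) / Real.logb q p ≤ (cpx q : ℝ) + q - 1) :
    ∀ n : ℕ, 1 < n →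
      (cpxP P n : ℝ) / Real.logb 3 n ≤
          (cpx q : ℝ) / Real.logb 3 q + ((q : ℝ) - 1) / Real.logb 3 q ∧
        (cpxP P n : ℝ) / Real.logb q n ≤ (cpx q : ℝ) + q - 1 := by
  have hq2 : 2 ≤ q := (hprime q hq).two_le
  have hlogq : 0 < Real.log q := Real.log_pos (by exact_mod_cast hq2)
  have hcond' : ∀ p ∈ P,
      ((cpx p : ℝ) + q - 2) * Real.log q ≤ ((cpx q : ℝ) + q - 1) * Real.log p := by
    intro p hp
    have hph := hcond p hp
    have hp2 : 2 ≤ p := (hprime p hp).two_le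
    have hlogp : 0 < Real.log p := Real.log_pos (by exact_mod_cast hp2)
    have hlb : 0 < Real.logb q p := by rw [← Real.log_div_log]; positivity
    have h1 := (div_le_iff₀ hlb).mp hph
    rw [← Real.log_div_log] at h1
    have h2 := mul_le_mul_of_nonneg_right h1 hlogq.le
    rwa [mul_assoc, div_mul_cancel₀ _ (ne_of_gt hlogq)] at h2
  intro n hn
  obtain ⟨c, hc, hb⟩ := main_bound P hprime q hq hqmin hcond' n hn
  have hcpx_le : cpxP P n ≤ c := Nat.sInf_le hc
  have hcpx_r : (cpxP P n : ℝ) ≤ c := by exact_mod_cast hcpx_le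
  have hlogn : 0 < Real.log n := Real.log_pos (by exact_mod_cast hn)
  have hmain : (cpxP P n : ℝ) * Real.log q ≤ ((cpx q : ℝ) + q - 1) * Real.log n :=
    le_trans (mul_le_mul_of_nonneg_right hcpx_r hlogq.le) hb
  constructor
  · have hlog3 : 0 < Real.log 3 := Real.log_pos (by norm_num)
    have hlb3q : 0 < Real.logb 3 q := Real.logb_pos (by norm_num) (by exact_mod_cast hq2)
    have hlb3n : 0 < Real.logb 3 n := Real.logb_pos (by norm_num) (by exact_mod_cast hn)
    rw [← add_div, div_le_div_iff₀ hlb3n hlb3q, ← Real.log_div_log,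
      ← Real.log_div_log]
    have h3 := mul_le_mul_of_nonneg_right hmain (inv_nonneg.mpr hlog3.le)
    have e : Real.log ↑n / Real.log 3 = Real.log ↑n * (Real.log 3)⁻¹ := by ring
    have e2 : Real.log ↑q / Real.log 3 = Real.log ↑q * (Real.log 3)⁻¹ := by ring
    rw [e, e2]
    nlinarith [h3]
  · have hlbn : 0 < Real.logb q n :=
      Real.logb_pos (by exact_mod_cast hq2) (by exact_mod_cast hn)
    rw [div_le_iff₀ hlbn, ← Real.log_div_log, ← mul_div_assoc, le_div_iff₀ hlogq]
    exact hmain
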